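/- For the exponential function f(z) = e^z and any α ∈ ℂ, the radius of univalence R of g(z) = (z−α)e^z around α satisfies R ≥ e^{−φ}·φ/(1+φ) where φ = (√5−1)/2. In particular, there is an absolute constant c > 0 such that g is injective on D(α, c) for every α. -/

import Mathlib

open Complex Metric

theorem stmt12 (α : ℂ) (φ : ℝ) (hφ : φ = (Real.sqrt 5 - 1) / 2) :
    Set.InjOn (fun z => (z - α) * Complex.exp z) (ball α (Real.exp (-φ) * φ / (1 + φ))) := by
  set r : ℝ := Real.exp (-φ) * φ / (1 + φ) with hrdef
  -- bounds on φ
  have h5lt : Real.sqrt 5 < 7/3 := by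
    rw [show (7/3 : ℝ) = Real.sqrt ((7/3)^2) from (Real.sqrt_sq (by norm_num)).symm]
    apply Real.sqrt_lt_sqrt <;> norm_num
  have h5gt : 2 < Real.sqrt 5 := by
    nlinarith [Real.sq_sqrt (show (0:ℝ) ≤ 5 by norm_num), Real.sqrt_nonneg 5]
  have hφpos : 0 < φ := by rw [hφ]; linarith
  have hφlt : φ < 2/3 := by rw [hφ]; linarith
  have hφgt : 1/2 < φ := by rw [hφ]; linarith
  -- exp (1/2) > 8/5
  have hehalf : (8/5 : ℝ) < Real.exp (1/2) := by
    have h1 : Real.exp (1/2) ^ (2:ℕ) = Real.exp 1 := by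
      rw [← Real.exp_nat_mul]; norm_num
    nlinarith [Real.exp_one_gt_d9, Real.exp_pos (1/2 : ℝ)]
  have hexpneg : Real.exp (-φ) < 5/8 := by
    have h1 : Real.exp (-φ) < Real.exp (-(1/2)) := Real.exp_lt_exp.2 (by linarith)
    have h2 : Real.exp (-(1/2)) = (Real.exp (1/2))⁻¹ := Real.exp_neg _
    rw [h2] at h1
    have h3 : (Real.exp (1/2))⁻¹ < 5/8 := by
      rw [inv_lt_comm₀ (Real.exp_pos _) (by norm_num)]
      linarith
    linarith
  have hrpos : 0 < r := by
    apply div_pos (mul_pos (Real.exp_pos _) hφpos) (by linarith)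
  have hrlt : r < 1/4 := by
    rw [hrdef, div_lt_iff₀ (by linarith : (0:ℝ) < 1 + φ)]
    nlinarith [Real.exp_pos (-φ)]
  -- exp r < 8/5
  have hexpquarter : Real.exp (1/4) < 8/5 := by
    have h1 : Real.exp (1/4) ^ (4:ℕ) = Real.exp 1 := by
      rw [← Real.exp_nat_mul]; norm_num
    have h2 : Real.exp (1/4) ^ (4:ℕ) < (8/5 : ℝ) ^ (4:ℕ) := by
      rw [h1]
      calc Real.exp 1 < 2.7182818286 := Real.exp_one_lt_d9
        _ < (8/5 : ℝ) ^ (4:ℕ) := by norm_num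
    exact lt_of_pow_lt_pow_left₀ 4 (by norm_num) h2
  have hexpr : Real.exp r < 8/5 :=
    lt_trans (Real.exp_lt_exp.2 hrlt) hexpquarter
  -- the auxiliary function h
  set g : ℂ → ℂ := fun z => (z - α) * Complex.exp z with hg
  set h : ℂ → ℂ := fun z => g z - Complex.exp α * z with hh
  have hderiv : ∀ z : ℂ,
      HasDerivAt h ((1 + (z - α)) * Complex.exp z - Complex.exp α) z := by
    intro z
    have h1 : HasDerivAt (fun z : ℂ => (z - α) * Complex.exp z)
        (1 * Complex.exp z + (z - α) * Complex.exp z) z :=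
      ((hasDerivAt_id z).sub_const α).mul (Complex.hasDerivAt_exp z)
    have h2 : HasDerivAt (fun z : ℂ => Complex.exp α * z) (Complex.exp α) z := by
      simpa using (hasDerivAt_id z).const_mul (Complex.exp α)
    have := h1.sub h2
    exact this.congr_deriv (by ring)
  -- bound on the derivative of h on the ball
  have hbound : ∀ z ∈ ball α r,
      ‖(1 + (z - α)) * Complex.exp z - Complex.exp α‖ ≤
        (9/10) * ‖Complex.exp α‖ := by
    intro z hz
    have hw : ‖z - α‖ < r := by
      simpa [mem_ball, Complex.dist_eq] using hz
    set w : ℂ := z - α with hwdef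
    have hzw : z = α + w := by rw [hwdef]; ring
    have hkey : (1 + w) * Complex.exp z - Complex.exp α
        = Complex.exp α * ((Complex.exp w - 1) + w * Complex.exp w) := by
      rw [hzw, Complex.exp_add]; ring
    rw [hkey, norm_mul]
    have habs1 : ‖(Complex.exp w - 1) + w * Complex.exp w‖ ≤
        2 * ‖w‖ + ‖w‖ * Real.exp r := by
      calc ‖(Complex.exp w - 1) + w * Complex.exp w‖
          ≤ ‖Complex.exp w - 1‖ + ‖w * Complex.exp w‖ :=
            norm_add_le _ _
        _ ≤ 2 * ‖w‖ + ‖w‖ * Real.exp r := by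
            gcongr
            · exact Complex.norm_exp_sub_one_le (by linarith)
            · rw [norm_mul]
              gcongr
              rw [Complex.norm_exp]
              exact Real.exp_le_exp.2 (le_trans (le_trans (le_abs_self _) (Complex.abs_re_le_norm w)) hw.le)
    have hfin : 2 * ‖w‖ + ‖w‖ * Real.exp r ≤ 9/10 := by
      have h1 : ‖w‖ * Real.exp r ≤ (1/4) * (8/5) := by
        apply mul_le_mul (by linarith) hexpr.le (Real.exp_pos _).le (by norm_num)
      linarith
    calc ‖Complex.exp α‖ * ‖(Complex.exp w - 1) + w * Complex.exp w‖
        ≤ ‖Complex.exp α‖ * (9/10) := by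
          apply mul_le_mul_of_nonneg_left (le_trans habs1 hfin) (norm_nonneg _)
      _ = (9/10) * ‖Complex.exp α‖ := by ring
  -- conclude injectivity
  intro z1 hz1 z2 hz2 heq
  have hlip := (convex_ball α r).norm_image_sub_le_of_norm_hasDerivWithin_le
    (fun x hx => (hderiv x).hasDerivWithinAt) hbound hz2 hz1
  have hhdiff : h z1 - h z2 = - (Complex.exp α * (z1 - z2)) := by
    simp only [hh]
    have : g z1 = g z2 := heq
    rw [this]; ring
  rw [hhdiff] at hlip
  have hnorm : ‖-(Complex.exp α * (z1 - z2))‖ = ‖Complex.exp α‖ * ‖z1 - z2‖ := by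
    rw [norm_neg]
    simp [norm_mul]
  rw [hnorm] at hlip
  have hepos : 0 < ‖Complex.exp α‖ := by
    simp [norm_pos_iff, Complex.exp_ne_zero]
  have : ‖z1 - z2‖ ≤ 0 := by nlinarith [norm_nonneg (z1 - z2)]
  have : z1 - z2 = 0 := by
    have := le_antisymm this (norm_nonneg _)
    exact norm_eq_zero.1 this
  exact sub_eq_zero.1 this
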